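/- Let f : [a,b] → ℝ be differentiable on an open interval containing [a,b] with a < b, and suppose |f'| is convex on [a,b]. Then |f((a+b)/2) - (1/(b-a)) ∫_a^b f(u) du| ≤ ((b-a)/8)(|f'(a)| + |f'(b)|). -/

import Mathlib

open MeasureTheory intervalIntegral Set

lemma integral_quadratic' (c2 c1 c0 a b : ℝ) :
    ∫ x in a..b, (c2*x^2 + c1*x + c0) = c2*(b^3-a^3)/3 + c1*(b^2-a^2)/2 + c0*(b-a) := by
  have h : ∀ x : ℝ, HasDerivAt (fun x => c2*x^3/3 + c1*x^2/2 + c0*x)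
      (c2*x^2 + c1*x + c0) x := by
    intro x
    have h3 : HasDerivAt (fun x:ℝ => x^3) (3*x^2) x := by simpa using hasDerivAt_pow 3 x
    have h2 : HasDerivAt (fun x:ℝ => x^2) (2*x) x := by simpa using hasDerivAt_pow 2 x
    have h1 : HasDerivAt (fun x:ℝ => x) 1 x := hasDerivAt_id x
    exact (((((h3.const_mul c2).div_const 3).add ((h2.const_mul c1).div_const 2)).add
      (h1.const_mul c0)).congr_deriv (by ring))
  rw [intervalIntegral.integral_eq_sub_of_hasDerivAt (fun x _ => h x)
    (Continuous.intervalIntegrable (by fun_prop) _ _)]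
  ring

theorem midpoint_abs_deriv_convex
    (a b c d : ℝ) (f f' : ℝ → ℝ) (hab : a < b)
    (hsub : Icc a b ⊆ Ioo c d)
    (hf : ∀ x ∈ Ioo c d, HasDerivAt f (f' x) x)
    (hconv : ∀ x ∈ Icc a b, ∀ y ∈ Icc a b, ∀ t ∈ Icc (0:ℝ) 1,
      |f' (t * x + (1 - t) * y)| ≤ t * |f' x| + (1 - t) * |f' y|) :
    |f ((a + b) / 2) - (1 / (b - a)) * ∫ u in a..b, f u| ≤
      ((b - a) / 8) * (|f' a| + |f' b|) := by
  set A := |f' a| with hA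
  set B := |f' b| with hB
  have hA0 : 0 ≤ A := abs_nonneg _
  have hB0 : 0 ≤ B := abs_nonneg _
  set m : ℝ := (a + b) / 2 with hm
  have hba : (0:ℝ) < b - a := by linarith
  have hba' : b - a ≠ 0 := ne_of_gt hba
  have ham : a ≤ m := by rw [hm]; linarith
  have hmb : m ≤ b := by rw [hm]; linarith
  -- pointwise bound from convexity
  have hptw : ∀ x ∈ Icc a b, |f' x| ≤ ((b - x) * A + (x - a) * B) / (b - a) := by
    intro x hx
    have ht : (b - x) / (b - a) ∈ Icc (0:ℝ) 1 := by
      constructor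
      · apply div_nonneg (by linarith [hx.2]) hba.le
      · rw [div_le_one hba]; linarith [hx.1]
    have hx' : (b - x) / (b - a) * a + (1 - (b - x) / (b - a)) * b = x := by
      field_simp; ring
    have := hconv a (by constructor <;> linarith) b (by constructor <;> linarith)
      ((b - x) / (b - a)) ht
    rw [hx'] at this
    calc |f' x| ≤ (b - x) / (b - a) * A + (1 - (b - x) / (b - a)) * B := this
      _ = ((b - x) * A + (x - a) * B) / (b - a) := by field_simp; ring
  -- crude bound for integrability
  have hCbd : ∀ x ∈ Icc a b, |f' x| ≤ A + B := by
    intro x hx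
    refine (hptw x hx).trans ?_
    rw [div_le_iff₀ hba]
    nlinarith [hx.1, hx.2]
  have hderiv_eq : ∀ x ∈ Icc a b, deriv f x = f' x := fun x hx => (hf x (hsub hx)).deriv
  -- integrability of f'
  have hint : IntervalIntegrable f' volume a b := by
    rw [intervalIntegrable_iff_integrableOn_Icc_of_le hab.le]
    have h1 : IntegrableOn (deriv f) (Icc a b) := by
      apply Measure.integrableOn_of_bounded (M := A + B) measure_Icc_lt_top.ne
        (measurable_deriv f).aestronglyMeasurable
      filter_upwards [ae_restrict_mem measurableSet_Icc] with x hx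
      rw [Real.norm_eq_abs, hderiv_eq x hx]
      exact hCbd x hx
    exact h1.congr_fun (fun x hx => hderiv_eq x hx) measurableSet_Icc
  have hcf : ContinuousOn f (Icc a b) :=
    fun x hx => (hf x (hsub hx)).continuousAt.continuousWithinAt
  have hintf : IntervalIntegrable f volume a b := by
    apply ContinuousOn.intervalIntegrable
    rwa [uIcc_of_le hab.le]
  have hsub1 : uIcc a m ⊆ uIcc a b := by
    rw [uIcc_of_le ham, uIcc_of_le hab.le]; exact Icc_subset_Icc le_rfl hmb
  have hsub2 : uIcc m b ⊆ uIcc a b := by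
    rw [uIcc_of_le hmb, uIcc_of_le hab.le]; exact Icc_subset_Icc ham le_rfl
  have hIccab : uIcc a b ⊆ Ioo c d := by rw [uIcc_of_le hab.le]; exact hsub
  -- integration by parts on [a,m]
  have hibp1 : ∫ x in a..m, (x - a) * f' x = (m - a) * f m - ∫ x in a..m, f x := by
    have h := intervalIntegral.integral_mul_deriv_eq_deriv_mul
      (u := fun x => x - a) (v := f) (u' := fun _ => (1:ℝ)) (v' := f')
      (fun x _ => (hasDerivAt_id x).sub_const a)
      (fun x hx => hf x (hIccab (hsub1 hx)))
      intervalIntegrable_const (hint.mono_set hsub1)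
    simpa using h
  have hibp2 : ∫ x in m..b, (x - b) * f' x = (b - m) * f m - ∫ x in m..b, f x := by
    have h := intervalIntegral.integral_mul_deriv_eq_deriv_mul
      (u := fun x => x - b) (v := f) (u' := fun _ => (1:ℝ)) (v' := f')
      (fun x _ => (hasDerivAt_id x).sub_const b)
      (fun x hx => hf x (hIccab (hsub2 hx)))
      intervalIntegrable_const (hint.mono_set hsub2)
    simp at h
    linarith [h]
  have hsplit : (∫ x in a..m, f x) + ∫ x in m..b, f x = ∫ x in a..b, f x :=
    intervalIntegral.integral_add_adjacent_intervals (hintf.mono_set hsub1)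
      (hintf.mono_set hsub2)
  have hkey : f m - (1 / (b - a)) * ∫ u in a..b, f u =
      (1 / (b - a)) * ((∫ x in a..m, (x - a) * f' x) + ∫ x in m..b, (x - b) * f' x) := by
    rw [hibp1, hibp2, ← hsplit]
    have hmsum : (m - a) + (b - m) = b - a := by ring
    field_simp
    ring
  rw [hkey]
  -- integrability of products
  have hi1 : IntervalIntegrable (fun x => (x - a) * f' x) volume a m :=
    (hint.mono_set hsub1).continuousOn_mul (by fun_prop)
  have hi2 : IntervalIntegrable (fun x => (x - b) * f' x) volume m b :=
    (hint.mono_set hsub2).continuousOn_mul (by fun_prop)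
  -- bounds on the two integrals
  have hb1 : |∫ x in a..m, (x - a) * f' x| ≤ (b - a)^2 * (2*A + B) / 24 := by
    have h1 : |∫ x in a..m, (x - a) * f' x| ≤ ∫ x in a..m, |(x - a) * f' x| :=
      intervalIntegral.abs_integral_le_integral_abs ham
    have h2 : ∫ x in a..m, |(x - a) * f' x| ≤
        ∫ x in a..m, (x - a) * (((b - x) * A + (x - a) * B) / (b - a)) := by
      apply intervalIntegral.integral_mono_on ham hi1.abs
        (Continuous.intervalIntegrable (by fun_prop) _ _)
      intro x hx
      have hxab : x ∈ Icc a b := ⟨hx.1, le_trans hx.2 hmb⟩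
      rw [abs_mul, abs_of_nonneg (by linarith [hx.1] : (0:ℝ) ≤ x - a)]
      exact mul_le_mul_of_nonneg_left (hptw x hxab) (by linarith [hx.1])
    have h3 : ∫ x in a..m, (x - a) * (((b - x) * A + (x - a) * B) / (b - a)) =
        (b - a)^2 * (2*A + B) / 24 := by
      rw [intervalIntegral.integral_congr (g := fun x => (1/(b-a)) *
        ((B - A)*x^2 + (A*(a+b) - 2*a*B)*x + (B*a^2 - A*a*b)))
        (fun x _ => by field_simp; ring)]
      rw [intervalIntegral.integral_const_mul, integral_quadratic', hm]
      field_simp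
      ring
    linarith
  have hb2 : |∫ x in m..b, (x - b) * f' x| ≤ (b - a)^2 * (A + 2*B) / 24 := by
    have h1 : |∫ x in m..b, (x - b) * f' x| ≤ ∫ x in m..b, |(x - b) * f' x| :=
      intervalIntegral.abs_integral_le_integral_abs hmb
    have h2 : ∫ x in m..b, |(x - b) * f' x| ≤
        ∫ x in m..b, (b - x) * (((b - x) * A + (x - a) * B) / (b - a)) := by
      apply intervalIntegral.integral_mono_on hmb hi2.abs
        (Continuous.intervalIntegrable (by fun_prop) _ _)
      intro x hx
      have hxab : x ∈ Icc a b := ⟨le_trans ham hx.1, hx.2⟩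
      rw [abs_mul, abs_sub_comm, abs_of_nonneg (by linarith [hx.2] : (0:ℝ) ≤ b - x)]
      exact mul_le_mul_of_nonneg_left (hptw x hxab) (by linarith [hx.2])
    have h3 : ∫ x in m..b, (b - x) * (((b - x) * A + (x - a) * B) / (b - a)) =
        (b - a)^2 * (A + 2*B) / 24 := by
      rw [intervalIntegral.integral_congr (g := fun x => (1/(b-a)) *
        ((A - B)*x^2 + ((a+b)*B - 2*b*A)*x + (A*b^2 - B*a*b)))
        (fun x _ => by field_simp; ring)]
      rw [intervalIntegral.integral_const_mul, integral_quadratic', hm]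
      field_simp
      ring
    linarith
  rw [abs_mul, abs_of_pos (by positivity : (0:ℝ) < 1/(b-a))]
  have htri : |(∫ x in a..m, (x - a) * f' x) + ∫ x in m..b, (x - b) * f' x| ≤
      (b - a)^2 * (A + B) / 8 := by
    calc |(∫ x in a..m, (x - a) * f' x) + ∫ x in m..b, (x - b) * f' x|
        ≤ |∫ x in a..m, (x - a) * f' x| + |∫ x in m..b, (x - b) * f' x| := abs_add_le _ _
      _ ≤ (b - a)^2 * (2*A + B) / 24 + (b - a)^2 * (A + 2*B) / 24 := add_le_add hb1 hb2
      _ = (b - a)^2 * (A + B) / 8 := by ring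
  calc 1/(b-a) * |(∫ x in a..m, (x - a) * f' x) + ∫ x in m..b, (x - b) * f' x|
      ≤ 1/(b-a) * ((b - a)^2 * (A + B) / 8) :=
        mul_le_mul_of_nonneg_left htri (by positivity)
    _ = ((b - a) / 8) * (A + B) := by field_simp
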